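/- Let A and B be finite index types, let (u_i)_{i∈I} be an orthonormal basis of ℂ^A and (w_k)_{k∈K} an orthonormal basis of ℂ^B, and set P_i := u_i u_iᴴ and Q_k := w_k w_kᴴ. If a matrix ρ indexed by A × B satisfies Σ_{i,k} (P_i ⊗ Q_k) ρ (P_i ⊗ Q_k) = ρ, then [ρ, ρ_A ⊗ ρ_B] = 0, where ρ_A and ρ_B are the partial traces of ρ over B and over A respectively. That is, a nonzero commutator [ρ, ρ_A ⊗ ρ_B] witnesses that ρ is disturbed by every such local von Neumann measurement in this basis pair, and vanishing of the commutator is necessary for classicality. -/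

import Mathlib

open Matrix Kronecker

section Aux

variable {n m : Type*} [Fintype n] [Fintype m]

/-- Product of two rank-one matrices. -/
lemma vecMulVec_mul_vecMulVec (x : n → ℂ) (y : m → ℂ) (x' : m → ℂ) (y' : n → ℂ) :
    Matrix.vecMulVec x y * Matrix.vecMulVec x' y'
      = (y ⬝ᵥ x') • Matrix.vecMulVec x y' := by
  ext p q
  simp only [Matrix.mul_apply, Matrix.vecMulVec_apply, Matrix.smul_apply,
    dotProduct, smul_eq_mul, Finset.sum_mul]
  apply Finset.sum_congr rfl
  intro r _
  ring

lemma vecMulVec_mul_matrix (x : n → ℂ) (y : m → ℂ) (M : Matrix m n ℂ) :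
    Matrix.vecMulVec x y * M = Matrix.vecMulVec x (y ᵥ* M) := by
  ext p q
  simp only [Matrix.mul_apply, Matrix.vecMulVec_apply, Matrix.vecMul, dotProduct,
    Finset.mul_sum]
  apply Finset.sum_congr rfl
  intro r _
  ring

end Aux

/-- Combination of Theorems 1 and 2: if a bipartite state `ρ` is undisturbed by
a local rank-one von Neumann measurement built from orthonormal bases
`(u i)` of `ℂ^A` and `(w k)` of `ℂ^B` (projectors `P i = u i (u i)ᴴ`,
`Q k = w k (w k)ᴴ`), then the witness vanishes: `[ρ, ρ_A ⊗ ρ_B] = 0`.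
Hence a nonzero commutator witnesses nonclassicality. -/
theorem measurement_invariance_implies_witness_vanishes
    {A B I K : Type*} [Fintype A] [DecidableEq A] [Fintype B] [DecidableEq B]
    [Fintype I] [DecidableEq I] [Fintype K] [DecidableEq K]
    (hcardI : Fintype.card I = Fintype.card A)
    (hcardK : Fintype.card K = Fintype.card B)
    (u : I → A → ℂ)
    (hu : ∀ i i', ∑ a, (starRingEnd ℂ) (u i a) * u i' a = if i = i' then 1 else 0)
    (w : K → B → ℂ)
    (hw : ∀ k k', ∑ b, (starRingEnd ℂ) (w k b) * w k' b = if k = k' then 1 else 0)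
    (P : I → Matrix A A ℂ)
    (hP : ∀ i, P i = Matrix.vecMulVec (u i) (star (u i)))
    (Q : K → Matrix B B ℂ)
    (hQ : ∀ k, Q k = Matrix.vecMulVec (w k) (star (w k)))
    (ρ : Matrix (A × B) (A × B) ℂ)
    (hfix : ∑ i, ∑ k, (P i ⊗ₖ Q k) * ρ * (P i ⊗ₖ Q k) = ρ)
    (ρA : Matrix A A ℂ)
    (hρA : ρA = Matrix.of fun a a' => ∑ b, ρ (a, b) (a', b))
    (ρB : Matrix B B ℂ)
    (hρB : ρB = Matrix.of fun b b' => ∑ a, ρ (a, b) (a, b')) :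
    ρ * (ρA ⊗ₖ ρB) - (ρA ⊗ₖ ρB) * ρ = 0 := by
  classical
  -- the product basis vectors
  set v : I → K → (A × B → ℂ) := fun i k p => u i p.1 * w k p.2 with hv
  -- rank-one projectors on the product space
  set R : I → K → Matrix (A × B) (A × B) ℂ :=
    fun i k => Matrix.vecMulVec (v i k) (star (v i k)) with hR
  -- Kronecker product of the local projectors is the product projector
  have hRk : ∀ i k, P i ⊗ₖ Q k = R i k := by
    intro i k
    ext ⟨a, b⟩ ⟨a', b'⟩
    show (P i) a a' * (Q k) b b' = _
    simp only [hP, hQ, hR, hv, Matrix.vecMulVec_apply, Pi.star_apply]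
    rw [star_mul']
    ring
  -- orthonormality of the product basis
  have horth : ∀ i k i' k',
      star (v i k) ⬝ᵥ v i' k' = if i = i' ∧ k = k' then 1 else 0 := by
    intro i k i' k'
    have : star (v i k) ⬝ᵥ v i' k'
        = (∑ a, (starRingEnd ℂ) (u i a) * u i' a) *
          (∑ b, (starRingEnd ℂ) (w k b) * w k' b) := by
      rw [Finset.sum_mul_sum]
      simp only [dotProduct, hv, Pi.star_apply]
      rw [← Finset.univ_product_univ, Finset.sum_product]
      apply Finset.sum_congr rfl; intro a _
      apply Finset.sum_congr rfl; intro b _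
      show star (v i k (a, b)) * v i' k' (a, b) = _
      simp only [hv, star_mul', starRingEnd_apply]
      ring
    rw [this, hu, hw]
    by_cases h1 : i = i' <;> by_cases h2 : k = k' <;> simp [h1, h2]
  -- multiplication rule for the product projectors
  have hRmul : ∀ i k i' k',
      R i k * R i' k' = if i = i' ∧ k = k' then R i k else 0 := by
    intro i k i' k'
    rw [hR]
    rw [_root_.vecMulVec_mul_vecMulVec, horth]
    by_cases h1 : i = i' <;> by_cases h2 : k = k' <;>
      simp [h1, h2]
  -- coefficients
  set c : I → K → ℂ := fun i k => star (v i k) ⬝ᵥ (ρ *ᵥ v i k) with hc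
  -- decomposition of ρ
  have hρdec : ρ = ∑ i, ∑ k, c i k • R i k := by
    rw [← hfix]
    apply Finset.sum_congr rfl; intro i _
    apply Finset.sum_congr rfl; intro k _
    rw [hRk, hR, vecMulVec_mul_matrix, _root_.vecMulVec_mul_vecMulVec,
      ← Matrix.dotProduct_mulVec]
  -- entrywise form of the decomposition
  have hρent : ∀ p q : A × B,
      ρ p q = ∑ i, ∑ k, c i k * (v i k p * (starRingEnd ℂ) (v i k q)) := by
    intro p q
    rw [hρdec]
    simp only [Matrix.sum_apply, Matrix.smul_apply, hR, Matrix.vecMulVec_apply,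
      Pi.star_apply, smul_eq_mul, starRingEnd_apply]
  -- partial trace over B
  have hρAdec : ρA = ∑ i, (∑ k, c i k) • P i := by
    ext a a'
    rw [hρA]
    simp only [Matrix.of_apply, Matrix.sum_apply, Matrix.smul_apply, hP,
      Matrix.vecMulVec_apply, smul_eq_mul]
    calc ∑ b, ρ (a, b) (a', b)
        = ∑ b, ∑ i, ∑ k, c i k * (v i k (a, b) * (starRingEnd ℂ) (v i k (a', b))) := by
          exact Finset.sum_congr rfl fun b _ => hρent (a, b) (a', b)
      _ = ∑ i, ∑ k, ∑ b, c i k * (v i k (a, b) * (starRingEnd ℂ) (v i k (a', b))) := by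
          rw [Finset.sum_comm]
          exact Finset.sum_congr rfl fun i _ => Finset.sum_comm
      _ = ∑ i, ∑ k, (c i k * (u i a * (starRingEnd ℂ) (u i a'))) *
            ∑ b, (starRingEnd ℂ) (w k b) * w k b := by
          apply Finset.sum_congr rfl; intro i _
          apply Finset.sum_congr rfl; intro k _
          rw [Finset.mul_sum]
          apply Finset.sum_congr rfl; intro b _
          simp only [hv, _root_.map_mul]
          ring
      _ = ∑ i, (∑ k, c i k) * (u i a * (starRingEnd ℂ) (u i a')) := by
          apply Finset.sum_congr rfl; intro i _
          rw [Finset.sum_mul]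
          apply Finset.sum_congr rfl; intro k _
          rw [hw k k]
          simp
      _ = ∑ i, (∑ k, c i k) * (u i a * star (u i a')) := rfl
  -- partial trace over A
  have hρBdec : ρB = ∑ l, (∑ j, c j l) • Q l := by
    ext b b'
    rw [hρB]
    simp only [Matrix.of_apply, Matrix.sum_apply, Matrix.smul_apply, hQ,
      Matrix.vecMulVec_apply, smul_eq_mul]
    calc ∑ a, ρ (a, b) (a, b')
        = ∑ a, ∑ j, ∑ l, c j l * (v j l (a, b) * (starRingEnd ℂ) (v j l (a, b'))) := by
          exact Finset.sum_congr rfl fun a _ => hρent (a, b) (a, b')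
      _ = ∑ j, ∑ l, ∑ a, c j l * (v j l (a, b) * (starRingEnd ℂ) (v j l (a, b'))) := by
          rw [Finset.sum_comm]
          exact Finset.sum_congr rfl fun j _ => Finset.sum_comm
      _ = ∑ j, ∑ l, (c j l * (w l b * (starRingEnd ℂ) (w l b'))) *
            ∑ a, (starRingEnd ℂ) (u j a) * u j a := by
          apply Finset.sum_congr rfl; intro j _
          apply Finset.sum_congr rfl; intro l _
          rw [Finset.mul_sum]
          apply Finset.sum_congr rfl; intro a _
          simp only [hv, _root_.map_mul]
          ring
      _ = ∑ j, ∑ l, c j l * (w l b * (starRingEnd ℂ) (w l b')) := by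
          apply Finset.sum_congr rfl; intro j _
          apply Finset.sum_congr rfl; intro l _
          rw [hu j j]
          simp
      _ = ∑ l, (∑ j, c j l) * (w l b * star (w l b')) := by
          rw [Finset.sum_comm]
          apply Finset.sum_congr rfl; intro l _
          rw [Finset.sum_mul]
          apply Finset.sum_congr rfl; intro j _
          simp only [starRingEnd_apply]
  -- decomposition of the Kronecker product of partial traces
  have hSdec : ρA ⊗ₖ ρB = ∑ i, ∑ l, ((∑ k, c i k) * (∑ j, c j l)) • R i l := by
    ext p q
    obtain ⟨a, b⟩ := p
    obtain ⟨a', b'⟩ := q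
    rw [hρAdec, hρBdec]
    simp only [Matrix.kroneckerMap_apply, Matrix.sum_apply, Matrix.smul_apply,
      smul_eq_mul, hP, hQ, hR, Matrix.vecMulVec_apply, hv, Pi.star_apply]
    rw [Finset.sum_mul_sum]
    apply Finset.sum_congr rfl; intro i _
    apply Finset.sum_congr rfl; intro l _
    simp only [star_mul', Pi.star_apply]
    ring
  -- generic product of two diagonal combinations
  have hprod : ∀ f g : I → K → ℂ,
      (∑ i, ∑ k, f i k • R i k) * (∑ i, ∑ k, g i k • R i k)
        = ∑ i, ∑ k, (f i k * g i k) • R i k := by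
    intro f g
    rw [Finset.sum_mul]
    apply Finset.sum_congr rfl; intro i _
    rw [Finset.sum_mul]
    apply Finset.sum_congr rfl; intro k _
    rw [Finset.mul_sum]
    have : ∀ j, (f i k • R i k) * ∑ l, g j l • R j l
        = if j = i then (f i k * g i k) • R i k else 0 := by
      intro j
      rw [Finset.mul_sum]
      by_cases hj : j = i
      · subst hj
        rw [if_pos rfl]
        rw [Fintype.sum_eq_single k (fun l hl => by
          rw [smul_mul_smul_comm, hRmul]
          simp [Ne.symm hl])]
        rw [smul_mul_smul_comm, hRmul]
        simp
      · rw [if_neg hj]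
        apply Finset.sum_eq_zero
        intro l _
        rw [smul_mul_smul_comm, hRmul, if_neg (fun h => hj h.1.symm)]
        simp
    rw [Finset.sum_congr rfl fun j _ => this j]
    simp
  -- rewrite the two Kronecker-coefficient sums as double sums over I × K
  have hSdec' : ρA ⊗ₖ ρB
      = ∑ i, ∑ k, ((∑ k', c i k') * (∑ j, c j k)) • R i k := hSdec
  rw [hρdec, hSdec', hprod, hprod]
  rw [sub_eq_zero]
  apply Finset.sum_congr rfl; intro i _
  apply Finset.sum_congr rfl; intro k _
  ring_nf
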